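/- Let H₁, H₂, H₃ be complex Hilbert spaces, let T₁ : H₁ → H₂ be a continuous linear operator, and let T₂ be a closed densely defined unbounded linear operator from H₁ to H₃ (a linear map defined on a dense subspace Dom(T₂) ⊆ H₁ whose graph is closed). Let F be a closed subspace of H₂ such that T₁(Ker(T₂)) ⊆ F, where Ker(T₂) = { h ∈ Dom(T₂) : T₂ h = 0 }. Let T₁* : H₂ → H₁ denote the Hilbert adjoint of T₁ and let T₂* denote the adjoint of T₂, a closed densely defined operator from H₃ to H₁. Suppose there exists a constant c > 0 such that c‖u‖ ≤ ‖T₁* u + T₂* v‖ for every u ∈ F and every v ∈ Dom(T₂*) that is orthogonal to Ker(T₂*) = { w ∈ Dom(T₂*) : T₂* w = 0 }. Then for every u ∈ F there exists h ∈ Ker(T₂) with T₁ h = u and ‖h‖ ≤ c⁻¹ ‖u‖; in particular T₁(Ker(T₂)) = F. -/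

import Mathlib

set_option synthInstance.maxHeartbeats 1000000
set_option maxHeartbeats 1600000
set_option linter.unusedSectionVars false

open scoped InnerProductSpace

section SkodaAux

local notation "⟪" x ", " y "⟫" => @inner ℂ _ _ x y

variable {H₁ H₂ H₃ : Type*}
    [NormedAddCommGroup H₁] [InnerProductSpace ℂ H₁] [CompleteSpace H₁]
    [NormedAddCommGroup H₂] [InnerProductSpace ℂ H₂] [CompleteSpace H₂]
    [NormedAddCommGroup H₃] [InnerProductSpace ℂ H₃] [CompleteSpace H₃]

lemma skoda_mem_ker_of_orth
    (T₂ : H₁ →ₗ.[ℂ] H₃) (hdense : Dense (T₂.domain : Set H₁)) (hclosed : T₂.IsClosed)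
    (h : H₁) (horth : ∀ v : T₂.adjoint.domain, ⟪(T₂.adjoint v : H₁), h⟫ = 0) :
    ∃ hh : h ∈ T₂.domain, T₂ ⟨h, hh⟩ = 0 := by
  set e := WithLp.prodContinuousLinearEquiv 2 ℂ H₁ H₃ with he
  set G : Submodule ℂ (WithLp 2 (H₁ × H₃)) :=
    T₂.graph.comap (e : WithLp 2 (H₁ × H₃) →ₗ[ℂ] H₁ × H₃) with hG
  have hGclosed : IsClosed (G : Set (WithLp 2 (H₁ × H₃))) :=
    hclosed.preimage e.continuous
  haveI : CompleteSpace G := hGclosed.completeSpace_coe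
  have hmem : e.symm (h, 0) ∈ G := by
    rw [← G.orthogonal_orthogonal]
    rw [Submodule.mem_orthogonal]
    intro z hz
    -- z ∈ Gᗮ
    set a : H₁ := z.ofLp.1 with ha
    set b : H₃ := z.ofLp.2 with hb
    have key : ∀ x : T₂.domain, ⟪(x : H₁), a⟫ + ⟪T₂ x, b⟫ = 0 := by
      intro x
      have hg : e.symm ((x : H₁), T₂ x) ∈ G := by
        simp only [hG, Submodule.mem_comap]
        have : (e : WithLp 2 (H₁ × H₃) →ₗ[ℂ] H₁ × H₃) (e.symm ((x : H₁), T₂ x))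
            = ((x : H₁), T₂ x) := e.apply_symm_apply _
        rw [this]
        exact T₂.mem_graph x
      have h0 := (Submodule.mem_orthogonal G z).mp hz _ hg
      rw [WithLp.prod_inner_apply] at h0
      convert h0 using 2 <;> rfl
    have hbdom : b ∈ T₂.adjoint.domain := by
      apply LinearPMap.mem_adjoint_domain_of_exists
      refine ⟨-a, fun x => ?_⟩
      have := key x
      have hconj := congrArg (starRingEnd ℂ) this
      simp only [map_add, inner_conj_symm, map_zero] at hconj
      rw [inner_neg_left]
      linear_combination -hconj
    have hadj : T₂.adjoint ⟨b, hbdom⟩ = -a := by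
      apply LinearPMap.adjoint_apply_eq hdense
      intro x
      have := key x
      have hconj := congrArg (starRingEnd ℂ) this
      simp only [map_add, inner_conj_symm, map_zero] at hconj
      rw [inner_neg_left]
      linear_combination -hconj
    have h0 := horth ⟨b, hbdom⟩
    rw [hadj, inner_neg_left, neg_eq_zero] at h0
    rw [WithLp.prod_inner_apply]
    have h1 : ((e.symm (h, 0) : WithLp 2 (H₁ × H₃)).ofLp.1 : H₁) = h := rfl
    have h2 : ((e.symm (h, 0) : WithLp 2 (H₁ × H₃)).ofLp.2 : H₃) = 0 := rfl
    rw [h1, h2, inner_zero_right, add_zero]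
    exact h0
  simp only [hG, Submodule.mem_comap] at hmem
  have : (e : WithLp 2 (H₁ × H₃) →ₗ[ℂ] H₁ × H₃) (e.symm (h, 0)) = (h, 0) :=
    e.apply_symm_apply _
  rw [this] at hmem
  rw [LinearPMap.mem_graph_iff] at hmem
  rcases hmem with ⟨⟨yv, hyv⟩, hy1, hy2⟩
  have hy1' : yv = h := hy1
  subst hy1'
  exact ⟨hyv, hy2⟩

lemma skoda_adjoint_ker_of_orth_range (T₂ : H₁ →ₗ.[ℂ] H₃)
    (hdense : Dense (T₂.domain : Set H₁)) (n : H₃)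
    (hn : ∀ x : T₂.domain, ⟪T₂ x, n⟫ = 0) :
    ∃ hnd : n ∈ T₂.adjoint.domain, T₂.adjoint ⟨n, hnd⟩ = 0 := by
  have key : ∀ x : T₂.domain, ⟪(0 : H₁), (x : H₁)⟫ = ⟪n, T₂ x⟫ := by
    intro x
    rw [inner_zero_left, ← inner_conj_symm, hn x, map_zero]
  have hnd : n ∈ T₂.adjoint.domain :=
    LinearPMap.mem_adjoint_domain_of_exists n ⟨0, key⟩
  exact ⟨hnd, LinearPMap.adjoint_apply_eq hdense _ key⟩

lemma skoda_estimate (T₁ : H₁ →L[ℂ] H₂) (T₂ : H₁ →ₗ.[ℂ] H₃)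
    (hdense : Dense (T₂.domain : Set H₁))
    (F : Submodule ℂ H₂) (c : ℝ)
    (hineq : ∀ u ∈ F, ∀ v : T₂.adjoint.domain,
      (∀ w : T₂.adjoint.domain, T₂.adjoint w = 0 → (inner ℂ (v : H₃) (w : H₃) : ℂ) = 0) →
      c * ‖u‖ ≤ ‖ContinuousLinearMap.adjoint T₁ u + T₂.adjoint v‖) :
    ∀ u ∈ F, ∀ r ∈ (LinearMap.range T₂.adjoint.toFun).topologicalClosure,
      c * ‖u‖ ≤ ‖ContinuousLinearMap.adjoint T₁ u + r‖ := by
  intro u hu r hr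
  set S := {r : H₁ | c * ‖u‖ ≤ ‖ContinuousLinearMap.adjoint T₁ u + r‖} with hSdef
  have hS : IsClosed S :=
    isClosed_le continuous_const (continuous_const.add continuous_id).norm
  have hRS : (LinearMap.range T₂.adjoint.toFun : Set H₁) ⊆ S := by
    rintro r' ⟨v, rfl⟩
    set N : Submodule ℂ H₃ := (LinearMap.range T₂.toFun)ᗮ with hNdef
    haveI : CompleteSpace N := (LinearMap.range T₂.toFun).isClosed_orthogonal.completeSpace_coe
    set n : H₃ := (Submodule.orthogonalProjection N (v : H₃) : H₃) with hn
    have hnN : n ∈ N := (Submodule.orthogonalProjection N (v : H₃)).2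
    have hnk : ∀ x : T₂.domain, ⟪T₂ x, n⟫ = 0 := by
      intro x
      exact (Submodule.mem_orthogonal _ n).mp hnN _ ⟨x, rfl⟩
    obtain ⟨hnd, hnval⟩ := skoda_adjoint_ker_of_orth_range T₂ hdense n hnk
    set v₀ : T₂.adjoint.domain := v - ⟨n, hnd⟩ with hv₀
    have horthc : ∀ w : T₂.adjoint.domain, T₂.adjoint w = 0 →
        (inner ℂ (v₀ : H₃) (w : H₃) : ℂ) = 0 := by
      intro w hw
      have hwN : (w : H₃) ∈ N := by
        rw [hNdef, Submodule.mem_orthogonal]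
        rintro _ ⟨x, rfl⟩
        have h1 : ⟪(T₂.adjoint w : H₁), (x : H₁)⟫ = ⟪(w : H₃), T₂ x⟫ :=
          T₂.adjoint_isFormalAdjoint hdense w x
        rw [hw, inner_zero_left] at h1
        have h2 : ⟪(T₂ x : H₃), (w : H₃)⟫ = 0 := by
          rw [← inner_conj_symm, ← h1, map_zero]
        exact h2
      have hv₀mem : (v₀ : H₃) ∈ Nᗮ := by
        have : (v₀ : H₃) = (v : H₃) - Submodule.orthogonalProjection N (v : H₃) := rfl
        rw [this]
        exact Submodule.sub_starProjection_mem_orthogonal _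
      exact (Submodule.mem_orthogonal' N _).mp hv₀mem _ hwN
    have hkey := hineq u hu v₀ horthc
    have : T₂.adjoint v₀ = T₂.adjoint v := by
      rw [hv₀, T₂.adjoint.map_sub, hnval, sub_zero]
    rwa [this] at hkey
  have : (↑(LinearMap.range T₂.adjoint.toFun).topologicalClosure : Set H₁) ⊆ S := by
    rw [Submodule.topologicalClosure_coe]
    exact closure_minimal hRS hS
  exact this hr

lemma skoda_proj_estimate (T₁ : H₁ →L[ℂ] H₂) (T₂ : H₁ →ₗ.[ℂ] H₃)
    (hdense : Dense (T₂.domain : Set H₁))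
    (F : Submodule ℂ H₂) (c : ℝ)
    (hineq : ∀ u ∈ F, ∀ v : T₂.adjoint.domain,
      (∀ w : T₂.adjoint.domain, T₂.adjoint w = 0 → (inner ℂ (v : H₃) (w : H₃) : ℂ) = 0) →
      c * ‖u‖ ≤ ‖ContinuousLinearMap.adjoint T₁ u + T₂.adjoint v‖) :
    ∀ u ∈ F, c * ‖u‖ ≤
      ‖(Submodule.orthogonalProjection (LinearMap.range T₂.adjoint.toFun)ᗮ
          (ContinuousLinearMap.adjoint T₁ u) : H₁)‖ := by
  intro u hu
  set R := LinearMap.range T₂.adjoint.toFun with hR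
  haveI : CompleteSpace Rᗮ := R.isClosed_orthogonal.completeSpace_coe
  set x := ContinuousLinearMap.adjoint T₁ u with hx
  have hmem : x - (Submodule.orthogonalProjection Rᗮ x : H₁) ∈ Rᗮᗮ :=
    Submodule.sub_starProjection_mem_orthogonal _
  rw [Submodule.orthogonal_orthogonal_eq_closure] at hmem
  have hr : -(x - (Submodule.orthogonalProjection Rᗮ x : H₁)) ∈ R.topologicalClosure :=
    neg_mem hmem
  have := skoda_estimate T₁ T₂ hdense F c hineq u hu _ hr
  have heq : x + -(x - (Submodule.orthogonalProjection Rᗮ x : H₁))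
      = (Submodule.orthogonalProjection Rᗮ x : H₁) := by abel
  rwa [heq] at this

end SkodaAux

section SkodaMain

local notation "⟪" x ", " y "⟫" => @inner ℂ _ _ x y

/-- **Skoda's functional-analysis lemma (sufficiency, with the norm bound).**
If `c‖u‖ ≤ ‖T₁* u + T₂* v‖` for all `u ∈ F` and all `v ∈ Dom(T₂*)` orthogonal to
`Ker(T₂*)`, then every `u ∈ F` is of the form `T₁ h` with `h ∈ Ker(T₂)` and
`‖h‖ ≤ c⁻¹‖u‖`; in particular `T₁(Ker T₂) = F`. -/
theorem skoda_functional_lemma_sufficiency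
    {H₁ H₂ H₃ : Type*}
    [NormedAddCommGroup H₁] [InnerProductSpace ℂ H₁] [CompleteSpace H₁]
    [NormedAddCommGroup H₂] [InnerProductSpace ℂ H₂] [CompleteSpace H₂]
    [NormedAddCommGroup H₃] [InnerProductSpace ℂ H₃] [CompleteSpace H₃]
    (T₁ : H₁ →L[ℂ] H₂) (T₂ : H₁ →ₗ.[ℂ] H₃)
    (hdense : Dense (T₂.domain : Set H₁)) (hclosed : T₂.IsClosed)
    (F : Submodule ℂ H₂) (hF : IsClosed (F : Set H₂))
    (hker : T₁ '' {x : H₁ | ∃ hx : x ∈ T₂.domain, T₂ ⟨x, hx⟩ = 0} ⊆ (F : Set H₂))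
    (c : ℝ) (hc : 0 < c)
    (hineq : ∀ u ∈ F, ∀ v : T₂.adjoint.domain,
      (∀ w : T₂.adjoint.domain, T₂.adjoint w = 0 → (inner ℂ (v : H₃) (w : H₃) : ℂ) = 0) →
      c * ‖u‖ ≤ ‖ContinuousLinearMap.adjoint T₁ u + T₂.adjoint v‖) :
    (∀ u ∈ F, ∃ h : H₁, ∃ hh : h ∈ T₂.domain,
        T₂ ⟨h, hh⟩ = 0 ∧ T₁ h = u ∧ ‖h‖ ≤ c⁻¹ * ‖u‖) ∧
      T₁ '' {x : H₁ | ∃ hx : x ∈ T₂.domain, T₂ ⟨x, hx⟩ = 0} = (F : Set H₂) := by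
  haveI : CompleteSpace F := hF.completeSpace_coe
  set R : Submodule ℂ H₁ := LinearMap.range T₂.adjoint.toFun with hRdef
  haveI : CompleteSpace Rᗮ := R.isClosed_orthogonal.completeSpace_coe
  set A : F →L[ℂ] H₁ :=
    Rᗮ.subtypeL ∘L (Submodule.orthogonalProjection Rᗮ) ∘L (ContinuousLinearMap.adjoint T₁)
      ∘L F.subtypeL with hAdef
  have hAapp : ∀ x : F, A x =
      (Submodule.orthogonalProjection Rᗮ (ContinuousLinearMap.adjoint T₁ (x : H₂)) : H₁) := fun x => rfl
  have hAmem : ∀ x : F, A x ∈ Rᗮ := fun x =>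
    (Submodule.orthogonalProjection Rᗮ (ContinuousLinearMap.adjoint T₁ (x : H₂))).2
  have hA : ∀ x : F, c * ‖x‖ ≤ ‖A x‖ := by
    intro x
    exact skoda_proj_estimate T₁ T₂ hdense F c hineq (x : H₂) x.2
  set T : F →L[ℂ] F := (ContinuousLinearMap.adjoint A) ∘L A with hTdef
  have hTinner : ∀ x y : F, ⟪T x, y⟫ = ⟪A x, A y⟫ := by
    intro x y
    exact ContinuousLinearMap.adjoint_inner_left A y (A x)
  -- lower bound for T
  have hTlow : ∀ x : F, c ^ 2 * ‖x‖ ≤ ‖T x‖ := by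
    intro x
    rcases eq_or_ne x 0 with rfl | hx
    · simp
    have hxpos : (0 : ℝ) < ‖x‖ := norm_pos_iff.mpr hx
    have h1 : ‖A x‖ ^ 2 = RCLike.re ⟪T x, x⟫ := by
      rw [hTinner x x, ← @inner_self_eq_norm_sq ℂ]
    have h2 : RCLike.re ⟪T x, x⟫ ≤ ‖T x‖ * ‖x‖ := by
      refine le_trans (RCLike.re_le_norm _) ?_
      exact norm_inner_le_norm _ _
    have h3 : (c * ‖x‖) ^ 2 ≤ ‖A x‖ ^ 2 := by
      apply pow_le_pow_left₀ (by positivity) (hA x)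
    have : c ^ 2 * ‖x‖ * ‖x‖ ≤ ‖T x‖ * ‖x‖ := by nlinarith
    exact le_of_mul_le_mul_right this hxpos
  -- T is surjective
  have hTsurj : ∀ z : F, ∃ x : F, T x = z := by
    have hanti : AntilipschitzWith ((c ^ 2)⁻¹).toNNReal T := by
      apply T.antilipschitz_of_bound
      intro x
      rw [Real.coe_toNNReal _ (by positivity), inv_mul_eq_div,
        le_div_iff₀ (by positivity : (0:ℝ) < c ^ 2)]
      nlinarith [hTlow x]
    have hclosedrange : IsClosed (Set.range T) :=
      hanti.isClosed_range T.uniformContinuous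
    have horthbot : (LinearMap.range (T : F →ₗ[ℂ] F))ᗮ = ⊥ := by
      rw [Submodule.eq_bot_iff]
      intro y hy
      have h0 : ⟪T y, y⟫ = 0 :=
        (Submodule.mem_orthogonal _ y).mp hy _ (LinearMap.mem_range_self _ y)
      rw [hTinner y y] at h0
      have hAy : A y = 0 := inner_self_eq_zero.mp h0
      have h1 := hA y
      rw [hAy, norm_zero] at h1
      have h2 : ‖y‖ ≤ 0 := by nlinarith
      exact norm_le_zero_iff.mp h2
    have hrange : LinearMap.range (T : F →ₗ[ℂ] F) = ⊤ := by
      have htc := Submodule.topologicalClosure_eq_top_iff.mpr horthbot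
      have heq2 : (LinearMap.range (T : F →ₗ[ℂ] F)).topologicalClosure
          = LinearMap.range (T : F →ₗ[ℂ] F) := by
        apply SetLike.ext'
        rw [Submodule.topologicalClosure_coe]
        have h3 : (LinearMap.range (T : F →ₗ[ℂ] F) : Set F) = Set.range T := by
          ext z
          simp [LinearMap.mem_range]
        rw [h3]
        exact hclosedrange.closure_eq
      rw [← heq2, htc]
    intro z
    have : z ∈ LinearMap.range (T : F →ₗ[ℂ] F) := by rw [hrange]; exact Submodule.mem_top
    exact LinearMap.mem_range.mp this
  -- main existence statement
  have main : ∀ u ∈ F, ∃ h : H₁, ∃ hh : h ∈ T₂.domain,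
      T₂ ⟨h, hh⟩ = 0 ∧ T₁ h = u ∧ ‖h‖ ≤ c⁻¹ * ‖u‖ := by
    intro u hu
    obtain ⟨x, hx⟩ := hTsurj ⟨u, hu⟩
    set h : H₁ := A x with hhdef
    have hK' : h ∈ Rᗮ := hAmem x
    have horth : ∀ v : T₂.adjoint.domain, ⟪(T₂.adjoint v : H₁), h⟫ = 0 := by
      intro v
      exact (Submodule.mem_orthogonal R h).mp hK' _ ⟨v, rfl⟩
    obtain ⟨hh, hker0⟩ := skoda_mem_ker_of_orth T₂ hdense hclosed h horth
    have hTF : T₁ h ∈ F := hker ⟨h, ⟨hh, hker0⟩, rfl⟩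
    -- For every u' in F, ⟪T₁ h, u'⟫ = ⟪u, u'⟫
    have hinner : ∀ u' : F, ⟪T₁ h, (u' : H₂)⟫ = ⟪u, (u' : H₂)⟫ := by
      intro u'
      have e1 : ⟪T₁ h, (u' : H₂)⟫ = ⟪h, ContinuousLinearMap.adjoint T₁ (u' : H₂)⟫ :=
        (ContinuousLinearMap.adjoint_inner_right T₁ h (u' : H₂)).symm
      have e2 : ⟪h, ContinuousLinearMap.adjoint T₁ (u' : H₂)⟫ = ⟪h, A u'⟫ := by
        have hsplit : ContinuousLinearMap.adjoint T₁ (u' : H₂) =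
            A u' + (ContinuousLinearMap.adjoint T₁ (u' : H₂) - A u') := by abel
        rw [hsplit, inner_add_right]
        have : ⟪h, ContinuousLinearMap.adjoint T₁ (u' : H₂) - A u'⟫ = 0 := by
          apply Submodule.inner_right_of_mem_orthogonal hK'
          rw [hAapp u']
          exact Submodule.sub_starProjection_mem_orthogonal _
        rw [this, add_zero]
      have e3 : ⟪h, A u'⟫ = ⟪A x, A u'⟫ := rfl
      have e4 : ⟪A x, A u'⟫ = ⟪T x, u'⟫ := (hTinner x u').symm
      have e5 : ⟪T x, u'⟫ = ⟪u, (u' : H₂)⟫ := by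
        rw [hx]; rfl
      rw [e1, e2, e3, e4, e5]
    have hT1h : T₁ h = u := by
      have hsub : T₁ h - u ∈ F := F.sub_mem hTF hu
      have h0 : ⟪T₁ h - u, T₁ h - u⟫ = 0 := by
        rw [inner_sub_left]
        rw [hinner ⟨T₁ h - u, hsub⟩]
        ring
      exact sub_eq_zero.mp (inner_self_eq_zero.mp h0)
    refine ⟨h, hh, hker0, hT1h, ?_⟩
    -- norm bound
    have hb1 : ‖A x‖ ^ 2 = RCLike.re ⟪T x, x⟫ := by
      rw [hTinner x x, ← @inner_self_eq_norm_sq ℂ]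
    have hb2 : ⟪T x, x⟫ = ⟪u, (x : H₂)⟫ := by rw [hx]; rfl
    have hb3 : RCLike.re ⟪T x, x⟫ ≤ ‖u‖ * ‖x‖ := by
      rw [hb2]
      refine le_trans (RCLike.re_le_norm _) ?_
      refine le_trans (norm_inner_le_norm _ _) ?_
      rw [Submodule.norm_coe]
    have hb4 : ‖x‖ ≤ c⁻¹ * ‖A x‖ := by
      rw [← mul_le_mul_iff_right₀ hc, ← mul_assoc, mul_inv_cancel₀ hc.ne', one_mul]
      exact hA x
    rcases eq_or_lt_of_le (norm_nonneg (A x)) with hz | hz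
    · rw [hhdef, ← hz]
      positivity
    · have : ‖A x‖ ^ 2 ≤ ‖u‖ * (c⁻¹ * ‖A x‖) := by
        calc ‖A x‖ ^ 2 = RCLike.re ⟪T x, x⟫ := hb1
        _ ≤ ‖u‖ * ‖x‖ := hb3
        _ ≤ ‖u‖ * (c⁻¹ * ‖A x‖) := by
            exact mul_le_mul_of_nonneg_left hb4 (norm_nonneg u)
      have : ‖A x‖ ≤ c⁻¹ * ‖u‖ := by nlinarith
      exact this
  refine ⟨main, Set.Subset.antisymm hker ?_⟩
  intro u hu
  obtain ⟨h, hh, h0, hT, _⟩ := main u hu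
  exact ⟨h, ⟨hh, h0⟩, hT⟩

end SkodaMain
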